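/- Let p be a prime and let C be an algebraically closed field of characteristic p equipped with a valuation v : C → ℝ≥0 with valuation ring O = {x ∈ C : v(x) ≤ 1}. Let π ∈ O be a nonzero element with v(π) < 1. Form the quotient rings A := O[Y]/(πY) and B := O[Y']/(π^p Y'), and let φ : A → B be the ring homomorphism determined by φ(a) = a^p for a ∈ O and φ(Y) = Y', and ι : A → B the ring homomorphism determined by ι(a) = a for a ∈ O and ι(Y) = π^{p−1}·Y'. Then the additive map φ − ι : A → B is surjective, and its kernel is exactly the image of the prime field 𝔽_p ⊆ O in A. In other words, the sequence 0 → 𝔽_p → A → B → 0, with second map φ − ι, is exact. -/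

import Mathlib

/-- The ring homomorphism `O[Y]/(πY) → O[Y']/(π^p Y')` determined by `a ↦ a^p` on `O`
and `Y ↦ Y'` (a lift of Frobenius). -/
noncomputable def ASFrobeniusMap (p : ℕ) [Fact p.Prime]
    (O : Type*) [CommRing O] [CharP O p] (π : O) :
    (Polynomial O ⧸ Ideal.span {Polynomial.C π * Polynomial.X}) →+*
      (Polynomial O ⧸ Ideal.span {Polynomial.C (π ^ p) * Polynomial.X}) :=
  Ideal.Quotient.lift _
    ((Ideal.Quotient.mk (Ideal.span {Polynomial.C (π ^ p) * Polynomial.X})).comp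
      (Polynomial.mapRingHom (frobenius O p)))
    (by
      intro a ha
      rw [Ideal.mem_span_singleton] at ha
      obtain ⟨c, rfl⟩ := ha
      rw [map_mul]
      have h0 : ((Ideal.Quotient.mk (Ideal.span {Polynomial.C (π ^ p) * Polynomial.X})).comp
          (Polynomial.mapRingHom (frobenius O p))) (Polynomial.C π * Polynomial.X) = 0 := by
        rw [RingHom.comp_apply, Ideal.Quotient.eq_zero_iff_mem]
        have hmap : (Polynomial.mapRingHom (frobenius O p)) (Polynomial.C π * Polynomial.X)
            = Polynomial.C (π ^ p) * Polynomial.X := by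
          simp [Polynomial.map_mul, Polynomial.map_C, Polynomial.map_X, frobenius_def]
        rw [hmap]
        exact Ideal.subset_span rfl
      rw [h0, zero_mul])

/-- The ring homomorphism `O[Y]/(πY) → O[Y']/(π^p Y')` determined by `a ↦ a` on `O`
and `Y ↦ π^{p−1}·Y'`. -/
noncomputable def ASInclusionMap (p : ℕ) [Fact p.Prime]
    (O : Type*) [CommRing O] (π : O) :
    (Polynomial O ⧸ Ideal.span {Polynomial.C π * Polynomial.X}) →+*
      (Polynomial O ⧸ Ideal.span {Polynomial.C (π ^ p) * Polynomial.X}) :=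
  Ideal.Quotient.lift _
    ((Ideal.Quotient.mk (Ideal.span {Polynomial.C (π ^ p) * Polynomial.X})).comp
      (Polynomial.eval₂RingHom (Polynomial.C : O →+* Polynomial O)
        (Polynomial.C (π ^ (p - 1)) * Polynomial.X)))
    (by
      intro a ha
      rw [Ideal.mem_span_singleton] at ha
      obtain ⟨c, rfl⟩ := ha
      rw [map_mul]
      have h0 : ((Ideal.Quotient.mk (Ideal.span {Polynomial.C (π ^ p) * Polynomial.X})).comp
          (Polynomial.eval₂RingHom (Polynomial.C : O →+* Polynomial O)
            (Polynomial.C (π ^ (p - 1)) * Polynomial.X))) (Polynomial.C π * Polynomial.X)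
          = 0 := by
        rw [RingHom.comp_apply, Ideal.Quotient.eq_zero_iff_mem]
        have hπ : π * π ^ (p - 1) = π ^ p := by
          rw [← pow_succ']
          congr 1
          exact Nat.succ_pred_eq_of_pos (Fact.out : p.Prime).pos
        have hx : (Polynomial.eval₂RingHom (Polynomial.C : O →+* Polynomial O)
              (Polynomial.C (π ^ (p - 1)) * Polynomial.X)) (Polynomial.C π * Polynomial.X)
            = Polynomial.C (π ^ p) * Polynomial.X := by
          simp only [Polynomial.coe_eval₂RingHom, Polynomial.eval₂_mul, Polynomial.eval₂_C,
            Polynomial.eval₂_X]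
          rw [← mul_assoc, ← Polynomial.C_mul, hπ]
        rw [hx]
        exact Ideal.subset_span rfl
      rw [h0, zero_mul])

open Polynomial in
private lemma AS_coeff_eval₂_C_mul_X {R : Type*} [CommRing R] (d : R) (f : R[X]) (n : ℕ) :
    (f.eval₂ C (C d * X)).coeff n = f.coeff n * d ^ n := by
  induction f using Polynomial.induction_on' with
  | add r s hr hs => simp [eval₂_add, hr, hs, add_mul]
  | monomial m a =>
    rw [eval₂_monomial, mul_pow, ← C_pow, ← mul_assoc, ← C_mul, coeff_C_mul, coeff_X_pow,
      coeff_monomial]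
    by_cases h : n = m
    · subst h; simp
    · simp [h, Ne.symm h]

private lemma AS_eq_natCast_of_pow_eq {R : Type*} [CommRing R] [IsDomain R]
    (p : ℕ) [Fact p.Prime] [CharP R p] (a : R) (h : a ^ p = a) :
    ∃ k : ℕ, k < p ∧ a = k := by
  classical
  have hp : p.Prime := Fact.out
  set q : Polynomial R := Polynomial.X ^ p - Polynomial.X with hq
  have hdeg : q.degree = p := by
    rw [hq, Polynomial.degree_sub_eq_left_of_degree_lt, Polynomial.degree_X_pow]
    rw [Polynomial.degree_X_pow, Polynomial.degree_X]
    exact_mod_cast hp.one_lt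
  have hq0 : q ≠ 0 := by
    intro h0
    rw [h0, Polynomial.degree_zero] at hdeg
    exact absurd hdeg.symm (by simp)
  have hroot : ∀ x : R, x ^ p = x → x ∈ q.roots := by
    intro x hx
    rw [Polynomial.mem_roots hq0]
    simp [hq, Polynomial.IsRoot, sub_eq_zero, hx]
  set s : Finset R := (Finset.range p).image (Nat.cast : ℕ → R) with hs
  have hcard : s.card = p := by
    rw [hs, Finset.card_image_of_injOn, Finset.card_range]
    intro i hi j hj hij
    exact CharP.natCast_injOn_Iio R p (by simpa using Finset.mem_range.mp hi)
      (by simpa using Finset.mem_range.mp hj) hij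
  by_contra hcon
  push_neg at hcon
  have has : a ∉ s := by
    intro ha
    obtain ⟨k, hk, hk2⟩ := Finset.mem_image.mp ha
    exact hcon k (Finset.mem_range.mp hk) hk2.symm
  have hsub : insert a s ⊆ q.roots.toFinset := by
    intro x hx
    rw [Multiset.mem_toFinset]
    rcases Finset.mem_insert.mp hx with rfl | hxs
    · exact hroot _ h
    · obtain ⟨k, _, rfl⟩ := Finset.mem_image.mp hxs
      apply hroot
      have h2 := map_natCast (frobenius R p) k
      rwa [frobenius_def] at h2
  have h1 : p + 1 ≤ q.roots.toFinset.card := by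
    have hc : (insert a s).card = p + 1 := by
      rw [Finset.card_insert_of_notMem has, hcard]
    rw [← hc]
    exact Finset.card_le_card hsub
  have h2 : q.roots.toFinset.card ≤ p := by
    calc q.roots.toFinset.card ≤ Multiset.card q.roots := q.roots.toFinset_card_le
      _ ≤ q.natDegree := Polynomial.card_roots' q
      _ = p := Polynomial.natDegree_eq_of_degree_eq_some hdeg
  omega

private lemma AS_exists_root (p : ℕ) [Fact p.Prime] {C : Type*} [Field C] [IsAlgClosed C]
    (v : Valuation C NNReal) (c b : v.integer) :
    ∃ a : v.integer, a ^ p - c * a = b := by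
  have hp : p.Prime := Fact.out
  set q : Polynomial C :=
    Polynomial.X ^ p - (Polynomial.C (c : C) * Polynomial.X + Polynomial.C (b : C)) with hq
  have hdeg : q.degree = p := by
    rw [hq, Polynomial.degree_sub_eq_left_of_degree_lt, Polynomial.degree_X_pow]
    rw [Polynomial.degree_X_pow]
    refine lt_of_le_of_lt (Polynomial.degree_add_le _ _) (max_lt ?_ ?_)
    · exact lt_of_le_of_lt (Polynomial.degree_C_mul_X_le _) (by exact_mod_cast hp.one_lt)
    · exact lt_of_le_of_lt (Polynomial.degree_C_le)
        (by exact_mod_cast Nat.pos_of_ne_zero hp.ne_zero)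
  obtain ⟨x, hx⟩ := IsAlgClosed.exists_root q (by rw [hdeg]; exact_mod_cast hp.ne_zero)
  have heq : x ^ p = (c : C) * x + (b : C) := by
    have h2 := hx
    simp only [hq, Polynomial.IsRoot, Polynomial.eval_sub, Polynomial.eval_pow,
      Polynomial.eval_X, Polynomial.eval_add, Polynomial.eval_mul, Polynomial.eval_C,
      sub_eq_zero] at h2
    exact h2
  have hxint : v x ≤ 1 := by
    by_contra hgt
    push_neg at hgt
    have h1 : v (x ^ p) ≤ v x := by
      rw [heq]
      refine le_trans (v.map_add _ _) (max_le ?_ ?_)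
      · rw [v.map_mul]
        calc v (c : C) * v x ≤ 1 * v x := mul_le_mul_left c.2 _
          _ = v x := one_mul _
      · exact le_trans b.2 hgt.le
    rw [v.map_pow] at h1
    have h2 : v x < v x ^ p := by
      conv_lhs => rw [← pow_one (v x)]
      exact pow_lt_pow_right₀ hgt hp.one_lt
    exact absurd (lt_of_lt_of_le h2 h1) (lt_irrefl _)
  refine ⟨⟨x, hxint⟩, ?_⟩
  apply Subtype.ext
  push_cast
  rw [heq]
  ring

private lemma AS_dvd_of_key (p : ℕ) [Fact p.Prime] {C : Type*} [Field C]
    (v : Valuation C NNReal) (π a : v.integer) (hπ0 : π ≠ 0) (hπ1 : v (π : C) < 1)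
    {i : ℕ} (hi : i ≠ 0)
    (h : π ^ p ∣ a ^ p - a * (π ^ (p - 1)) ^ i) : π ∣ a := by
  have hp : p.Prime := Fact.out
  by_contra hnd
  have halg : ∀ z : v.integer, algebraMap v.integer C z = (z : C) := fun z => rfl
  have hlt : v (π : C) < v (a : C) := by
    by_contra hle
    push_neg at hle
    exact hnd ((Valuation.integer.integers v).dvd_of_le (by rw [halg, halg]; exact hle))
  have hπpos : 0 < v (π : C) := by
    rw [pos_iff_ne_zero, Ne, Valuation.zero_iff]
    exact fun h0 => hπ0 (Subtype.ext h0)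
  have hapos : 0 < v (a : C) := lt_trans hπpos hlt
  have hva1 : v (a : C) ≤ 1 := a.2
  have hexp : p ≤ (p - 1) * i + 1 := by
    have h1 : 1 ≤ i := Nat.one_le_iff_ne_zero.mpr hi
    have h2 : p - 1 ≤ (p - 1) * i := Nat.le_mul_of_pos_right (p - 1) h1
    have h3 : p - 1 + 1 ≤ (p - 1) * i + 1 := Nat.add_le_add_right h2 1
    rwa [Nat.sub_add_cancel hp.one_le] at h3
  have hkey : v ((a : C) * ((π : C) ^ (p - 1)) ^ i) < v ((a : C) ^ p) := by
    rw [v.map_mul, v.map_pow, v.map_pow, v.map_pow]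
    calc v (a : C) * (v (π : C) ^ (p - 1)) ^ i
        < v (a : C) * (v (a : C) ^ (p - 1)) ^ i := by
          refine mul_lt_mul_of_pos_left ?_ hapos
          exact pow_lt_pow_left₀ (pow_lt_pow_left₀ hlt zero_le
            (Nat.sub_ne_zero_of_lt hp.one_lt)) zero_le hi
      _ = v (a : C) ^ ((p - 1) * i + 1) := by rw [← pow_mul, pow_succ, mul_comm]
      _ ≤ v (a : C) ^ p := pow_le_pow_of_le_one zero_le hva1 hexp
  have hdiff : v (((a : C)) ^ p - (a : C) * ((π : C) ^ (p - 1)) ^ i) = v ((a : C)) ^ p := by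
    rw [Valuation.map_sub_eq_of_lt_left _ hkey, v.map_pow]
  have hle : v ((a : C)) ^ p ≤ v ((π : C)) ^ p := by
    have h2 := (Valuation.integer.integers v).le_of_dvd h
    rw [halg, halg] at h2
    have h3 : ((a ^ p - a * (π ^ (p - 1)) ^ i : v.integer) : C)
        = (a : C) ^ p - (a : C) * ((π : C) ^ (p - 1)) ^ i := by push_cast; ring
    have h4 : ((π ^ p : v.integer) : C) = (π : C) ^ p := by push_cast; ring
    rw [h3, h4, hdiff, v.map_pow] at h2
    exact h2
  exact absurd hle (not_le.mpr (pow_lt_pow_left₀ hlt zero_le hp.ne_zero))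

private lemma ASFrobeniusMap_mk (p : ℕ) [Fact p.Prime]
    (O : Type*) [CommRing O] [CharP O p] (π : O) (f : Polynomial O) :
    ASFrobeniusMap p O π (Ideal.Quotient.mk _ f)
      = Ideal.Quotient.mk (Ideal.span {Polynomial.C (π ^ p) * Polynomial.X})
          (f.map (frobenius O p)) := by
  simp [ASFrobeniusMap, Ideal.Quotient.lift_mk]

private lemma ASInclusionMap_mk (p : ℕ) [Fact p.Prime]
    (O : Type*) [CommRing O] (π : O) (f : Polynomial O) :
    ASInclusionMap p O π (Ideal.Quotient.mk _ f)
      = Ideal.Quotient.mk (Ideal.span {Polynomial.C (π ^ p) * Polynomial.X})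
          (f.eval₂ Polynomial.C (Polynomial.C (π ^ (p - 1)) * Polynomial.X)) := by
  simp [ASInclusionMap, Ideal.Quotient.lift_mk]

set_option maxHeartbeats 1600000 in
set_option synthInstance.maxHeartbeats 400000 in
/-- **An Artin–Schreier style exact sequence.**
Let `p` be a prime and `C` an algebraically closed field of characteristic `p` with a
valuation `v : C → ℝ≥0`, with valuation ring `O = {x : v x ≤ 1}`.  Let `π ∈ O` be a
nonzero element with `v π < 1`.  Form `A := O[Y]/(πY)` and `B := O[Y']/(π^p Y')`, let
`φ : A → B` be the ring map with `φ(a) = a^p` for `a ∈ O` and `φ(Y) = Y'`, and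
`ι : A → B` the ring map with `ι(a) = a` and `ι(Y) = π^{p−1}·Y'`.  Then `φ − ι : A → B`
is surjective, and its kernel is exactly the image of the prime field `𝔽_p ⊆ O` in `A`
(i.e. the image of `ℤ` in `A`); in other words `0 → 𝔽_p → A → B → 0` is exact. -/
theorem artin_schreier_sequence_for_valuation_ring
    (p : ℕ) [Fact p.Prime] (C : Type*) [Field C] [IsAlgClosed C] [CharP C p]
    (v : Valuation C NNReal) (π : v.integer) (hπ0 : π ≠ 0) (hπ1 : v (π : C) < 1) :
    (Function.Surjective
      (fun x : Polynomial v.integer ⧸ Ideal.span {Polynomial.C π * Polynomial.X} =>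
        ASFrobeniusMap p v.integer π x - ASInclusionMap p v.integer π x)) ∧
    ∀ x : Polynomial v.integer ⧸ Ideal.span {Polynomial.C π * Polynomial.X},
      ASFrobeniusMap p v.integer π x = ASInclusionMap p v.integer π x ↔
        x ∈ Set.range
          (Int.cast : ℤ → Polynomial v.integer ⧸ Ideal.span {Polynomial.C π * Polynomial.X}) := by
  classical
  have hp : p.Prime := Fact.out
  constructor
  · -- surjectivity
    intro y
    obtain ⟨b, rfl⟩ := Ideal.Quotient.mk_surjective y
    have hroot : ∀ n : ℕ, ∃ a : v.integer, a ^ p - (π ^ (p - 1)) ^ n * a = b.coeff n :=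
      fun n => AS_exists_root p v ((π ^ (p - 1)) ^ n) (b.coeff n)
    choose r hr using hroot
    set r' : ℕ → v.integer := fun n => if b.coeff n = 0 then 0 else r n with hr'
    have hr'eq : ∀ n, r' n ^ p - (π ^ (p - 1)) ^ n * r' n = b.coeff n := by
      intro n
      by_cases hbn : b.coeff n = 0
      · simp [hr', hbn, zero_pow hp.ne_zero]
      · simp only [hr', if_neg hbn]
        exact hr n
    set a : Polynomial v.integer :=
      ∑ n ∈ b.support, Polynomial.C (r' n) * Polynomial.X ^ n with ha
    have hacoeff : ∀ n, a.coeff n = r' n := by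
      intro n
      rw [ha, Polynomial.finset_sum_coeff]
      simp only [Polynomial.coeff_C_mul, Polynomial.coeff_X_pow, mul_ite, mul_one, mul_zero]
      rw [Finset.sum_ite_eq b.support n r']
      by_cases hns : n ∈ b.support
      · simp [hns]
      · simp [hns, hr', Polynomial.notMem_support_iff.mp hns]
    refine ⟨Ideal.Quotient.mk _ a, ?_⟩
    show ASFrobeniusMap p v.integer π (Ideal.Quotient.mk _ a)
        - ASInclusionMap p v.integer π (Ideal.Quotient.mk _ a) = Ideal.Quotient.mk _ b
    rw [ASFrobeniusMap_mk, ASInclusionMap_mk, ← map_sub]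
    congr 1
    ext n
    rw [Polynomial.coeff_sub, Polynomial.coeff_map, AS_coeff_eval₂_C_mul_X, frobenius_def,
      hacoeff]
    exact_mod_cast (by linear_combination hr'eq n :
      r' n ^ p - r' n * (π ^ (p - 1)) ^ n = b.coeff n)
  · intro x
    constructor
    · intro hx
      obtain ⟨f, rfl⟩ := Ideal.Quotient.mk_surjective x
      rw [ASFrobeniusMap_mk, ASInclusionMap_mk, Ideal.Quotient.mk_eq_mk_iff_sub_mem,
        Ideal.mem_span_singleton] at hx
      obtain ⟨g, hg⟩ := hx
      have hcoeff : ∀ n, f.coeff n ^ p - f.coeff n * (π ^ (p - 1)) ^ n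
          = (Polynomial.C (π ^ p) * Polynomial.X * g).coeff n := by
        intro n
        rw [← hg, Polynomial.coeff_sub, Polynomial.coeff_map, AS_coeff_eval₂_C_mul_X,
          frobenius_def]
      have h0 : f.coeff 0 ^ p = f.coeff 0 := by
        have h1 := hcoeff 0
        rw [mul_assoc, Polynomial.mul_coeff_zero, Polynomial.mul_coeff_zero,
          Polynomial.coeff_X_zero, zero_mul, mul_zero, pow_zero, mul_one, sub_eq_zero] at h1
        exact h1
      obtain ⟨k, hk, hk2⟩ := AS_eq_natCast_of_pow_eq p (f.coeff 0) h0
      have hdvd : ∀ n, π ∣ f.coeff (n + 1) := by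
        intro n
        refine AS_dvd_of_key p v π (f.coeff (n + 1)) hπ0 hπ1 (Nat.succ_ne_zero n) ?_
        refine ⟨g.coeff n, ?_⟩
        have h1 := hcoeff (n + 1)
        rwa [mul_assoc, Polynomial.coeff_C_mul, Polynomial.coeff_X_mul] at h1
      have hdivX : Polynomial.C π ∣ f.divX := by
        rw [Polynomial.C_dvd_iff_dvd_coeff]
        intro n
        rw [Polynomial.coeff_divX]
        exact hdvd n
      obtain ⟨g', hg'⟩ := hdivX
      have hf : f = Polynomial.C π * Polynomial.X * g' + Polynomial.C (f.coeff 0) := by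
        conv_lhs => rw [← Polynomial.divX_mul_X_add f]
        rw [hg']
        ring
      refine ⟨(k : ℤ), ?_⟩
      have hmk : Ideal.Quotient.mk (Ideal.span {Polynomial.C π * Polynomial.X}) f
          = ((k : ℕ) : Polynomial v.integer ⧸ Ideal.span {Polynomial.C π * Polynomial.X}) := by
        rw [hf, map_add]
        have hz : Ideal.Quotient.mk (Ideal.span {Polynomial.C π * Polynomial.X})
            (Polynomial.C π * Polynomial.X * g') = 0 := by
          rw [Ideal.Quotient.eq_zero_iff_mem]
          exact Ideal.mul_mem_right _ _ (Ideal.subset_span rfl)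
        rw [hz, zero_add, hk2]
        rw [show (Polynomial.C ((k : ℕ) : v.integer)) = ((k : ℕ) : Polynomial v.integer) by
          simp]
        rw [map_natCast]
      rw [hmk]
      exact_mod_cast rfl
    · rintro ⟨n, rfl⟩
      rw [map_intCast, map_intCast]
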